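/- Let R_s be a real symmetric positive semidefinite d×d matrix and Q a complex d×d matrix. Suppose there exists M > 0 such that |(Q ξ, ξ)| ≤ M (R_s ξ, ξ) for all ξ ∈ ℂ^d. Then ‖Q ξ‖² ≤ 4 M² ‖R_s‖ (R_s ξ, ξ) for all ξ ∈ ℂ^d, where ‖R_s‖ denotes the operator norm of R_s. -/

import Mathlib

open Matrix

lemma aux_re_nonneg {d : ℕ} (Rs : Matrix (Fin d) (Fin d) ℝ)
    (hPSD : ∀ ξ : Fin d → ℝ, 0 ≤ Rs.mulVec ξ ⬝ᵥ ξ) (x : Fin d → ℂ) :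
    0 ≤ (((Rs.map Complex.ofReal).mulVec x) ⬝ᵥ star x).re := by
  have key : (((Rs.map Complex.ofReal).mulVec x) ⬝ᵥ star x).re
      = Rs.mulVec (fun i => (x i).re) ⬝ᵥ (fun i => (x i).re)
        + Rs.mulVec (fun i => (x i).im) ⬝ᵥ (fun i => (x i).im) := by
    simp only [dotProduct, Matrix.mulVec, Matrix.map_apply, Complex.re_sum, Pi.star_apply,
      Complex.star_def, Complex.mul_re, Complex.mul_im, Complex.conj_re, Complex.conj_im,
      Complex.ofReal_re, Complex.ofReal_im, Complex.re_sum, Complex.im_sum,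
      Finset.sum_mul, Finset.mul_sum]
    rw [← Finset.sum_add_distrib]
    congr 1; ext i
    rw [← Finset.sum_add_distrib]
    congr 1; ext j
    ring
  rw [key]
  exact add_nonneg (hPSD _) (hPSD _)

lemma aux_expand {d : ℕ} (A : Matrix (Fin d) (Fin d) ℂ) (x y : Fin d → ℂ) (α : ℂ) :
    A.mulVec (x + α • y) ⬝ᵥ star (x + α • y) =
      A.mulVec x ⬝ᵥ star x + α * (A.mulVec y ⬝ᵥ star x)
        + (starRingEnd ℂ) α * (A.mulVec x ⬝ᵥ star y)
        + α * (starRingEnd ℂ) α * (A.mulVec y ⬝ᵥ star y) := by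
  simp [Matrix.mulVec_add, Matrix.mulVec_smul, star_add, star_smul, dotProduct_add,
    add_dotProduct, dotProduct_smul, smul_dotProduct, smul_eq_mul]
  ring

-- polarization identity
lemma aux_pol {d : ℕ} (Q : Matrix (Fin d) (Fin d) ℂ) (x y : Fin d → ℂ) :
    Q.mulVec (x + (1:ℂ) • y) ⬝ᵥ star (x + (1:ℂ) • y)
      - Q.mulVec (x + (-1:ℂ) • y) ⬝ᵥ star (x + (-1:ℂ) • y)
      + Complex.I * (Q.mulVec (x + Complex.I • y) ⬝ᵥ star (x + Complex.I • y))
      - Complex.I * (Q.mulVec (x + (-Complex.I) • y) ⬝ᵥ star (x + (-Complex.I) • y))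
      = 4 * (Q.mulVec x ⬝ᵥ star y) := by
  rw [aux_expand, aux_expand, aux_expand, aux_expand]
  simp [Complex.conj_I]
  ring_nf
  try simp [Complex.I_sq]
  try ring

-- parallelogram-type identity
lemma aux_par {d : ℕ} (A : Matrix (Fin d) (Fin d) ℂ) (x y : Fin d → ℂ) :
    A.mulVec (x + (1:ℂ) • y) ⬝ᵥ star (x + (1:ℂ) • y)
      + A.mulVec (x + (-1:ℂ) • y) ⬝ᵥ star (x + (-1:ℂ) • y)
      + A.mulVec (x + Complex.I • y) ⬝ᵥ star (x + Complex.I • y)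
      + A.mulVec (x + (-Complex.I) • y) ⬝ᵥ star (x + (-Complex.I) • y)
      = 4 * (A.mulVec x ⬝ᵥ star x) + 4 * (A.mulVec y ⬝ᵥ star y) := by
  rw [aux_expand, aux_expand, aux_expand, aux_expand]
  simp [Complex.conj_I]
  ring_nf
  try simp [Complex.I_sq]
  try ring

-- quadratic scaling
lemma aux_scale {d : ℕ} (A : Matrix (Fin d) (Fin d) ℂ) (x : Fin d → ℂ) (c : ℝ) :
    A.mulVec ((c:ℂ) • x) ⬝ᵥ star ((c:ℂ) • x) = ((c^2 : ℝ) : ℂ) * (A.mulVec x ⬝ᵥ star x) := by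
  simp [Matrix.mulVec_smul, star_smul, smul_dotProduct, dotProduct_smul, smul_eq_mul,
    Complex.star_def, Complex.conj_ofReal]
  ring

section Aux
variable {d : ℕ}

lemma aux_CS (Rs : Matrix (Fin d) (Fin d) ℝ) (Q : Matrix (Fin d) (Fin d) ℂ) (M : ℝ)
    (hQ : ∀ ξ : Fin d → ℂ,
      ‖Q.mulVec ξ ⬝ᵥ star ξ‖ ≤ M * (((Rs.map (Complex.ofReal)).mulVec ξ) ⬝ᵥ star ξ).re)
    (x y : Fin d → ℂ) :
    ‖Q.mulVec x ⬝ᵥ star y‖ ≤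
      M * ((((Rs.map (Complex.ofReal)).mulVec x) ⬝ᵥ star x).re
        + (((Rs.map (Complex.ofReal)).mulVec y) ⬝ᵥ star y).re) := by
  set A := Rs.map (Complex.ofReal) with hA
  set D : ℂ → ℂ := fun α => Q.mulVec (x + α • y) ⬝ᵥ star (x + α • y) with hD
  set E : ℂ → ℂ := fun α => A.mulVec (x + α • y) ⬝ᵥ star (x + α • y) with hE
  have pol : D 1 - D (-1) + Complex.I * D Complex.I - Complex.I * D (-Complex.I)
      = 4 * (Q.mulVec x ⬝ᵥ star y) := aux_pol Q x y
  have par : E 1 + E (-1) + E Complex.I + E (-Complex.I)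
      = 4 * (A.mulVec x ⬝ᵥ star x) + 4 * (A.mulVec y ⬝ᵥ star y) := aux_par A x y
  have parre : (E 1).re + (E (-1)).re + (E Complex.I).re + (E (-Complex.I)).re
      = 4 * (A.mulVec x ⬝ᵥ star x).re + 4 * (A.mulVec y ⬝ᵥ star y).re := by
    have := congrArg Complex.re par
    simpa using this
  have h1 := hQ (x + (1:ℂ) • y)
  have h2 := hQ (x + (-1:ℂ) • y)
  have h3 := hQ (x + Complex.I • y)
  have h4 := hQ (x + (-Complex.I) • y)
  have tri : ‖(4:ℂ) * (Q.mulVec x ⬝ᵥ star y)‖ ≤ ‖D 1‖ + ‖D (-1)‖ + ‖D Complex.I‖ + ‖D (-Complex.I)‖ := by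
    rw [← pol]
    calc ‖D 1 - D (-1) + Complex.I * D Complex.I - Complex.I * D (-Complex.I)‖
        ≤ ‖D 1 - D (-1) + Complex.I * D Complex.I‖ + ‖Complex.I * D (-Complex.I)‖ :=
          norm_sub_le _ _
      _ ≤ ‖D 1 - D (-1)‖ + ‖Complex.I * D Complex.I‖ + ‖Complex.I * D (-Complex.I)‖ := by
          gcongr; exact norm_add_le _ _
      _ ≤ ‖D 1‖ + ‖D (-1)‖ + ‖Complex.I * D Complex.I‖ + ‖Complex.I * D (-Complex.I)‖ := by
          have := norm_sub_le (D 1) (D (-1)); linarith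
      _ = ‖D 1‖ + ‖D (-1)‖ + ‖D Complex.I‖ + ‖D (-Complex.I)‖ := by
          simp [norm_mul]
  have hnorm4 : ‖(4:ℂ) * (Q.mulVec x ⬝ᵥ star y)‖ = 4 * ‖Q.mulVec x ⬝ᵥ star y‖ := by
    rw [norm_mul]; norm_num
  have hb1 : ‖D 1‖ ≤ M * (E 1).re := h1
  have hb2 : ‖D (-1)‖ ≤ M * (E (-1)).re := h2
  have hb3 : ‖D Complex.I‖ ≤ M * (E Complex.I).re := h3
  have hb4 : ‖D (-Complex.I)‖ ≤ M * (E (-Complex.I)).re := h4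
  have hsum : M * (E 1).re + M * (E (-1)).re + M * (E Complex.I).re + M * (E (-Complex.I)).re
      = 4 * M * ((A.mulVec x ⬝ᵥ star x).re + (A.mulVec y ⬝ᵥ star y).re) := by
    rw [show M * (E 1).re + M * (E (-1)).re + M * (E Complex.I).re + M * (E (-Complex.I)).re
        = M * ((E 1).re + (E (-1)).re + (E Complex.I).re + (E (-Complex.I)).re) from by ring,
      parre]
    ring
  linarith

end Aux

theorem stmt_6 (d : ℕ) (Rs : Matrix (Fin d) (Fin d) ℝ) (hRs : Rsᵀ = Rs)
    (hPSD : ∀ ξ : Fin d → ℝ, 0 ≤ Rs.mulVec ξ ⬝ᵥ ξ)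
    (N : ℝ)
    (hN : ∀ η : Fin d → ℂ,
      (((Rs.map (Complex.ofReal)).mulVec η) ⬝ᵥ star η).re ≤ N * ∑ i, ‖η i‖ ^ 2)
    (Q : Matrix (Fin d) (Fin d) ℂ) (M : ℝ) (hM : 0 < M)
    (hQ : ∀ ξ : Fin d → ℂ,
      ‖Q.mulVec ξ ⬝ᵥ star ξ‖ ≤ M * (((Rs.map (Complex.ofReal)).mulVec ξ) ⬝ᵥ star ξ).re)
    (ξ : Fin d → ℂ) :
    ∑ i, ‖Q.mulVec ξ i‖ ^ 2 ≤
      4 * M ^ 2 * N * (((Rs.map (Complex.ofReal)).mulVec ξ) ⬝ᵥ star ξ).re := by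
  set A := Rs.map (Complex.ofReal) with hA
  set η : Fin d → ℂ := Q.mulVec ξ with hη
  set S : ℝ := ∑ i, ‖η i‖ ^ 2 with hS
  set a : ℝ := ((A.mulVec ξ) ⬝ᵥ star ξ).re with ha
  set b : ℝ := ((A.mulVec η) ⬝ᵥ star η).re with hb
  -- the dot product (Qξ, Qξ) equals S
  have hdot : Q.mulVec ξ ⬝ᵥ star η = (S : ℂ) := by
    rw [hS]
    push_cast
    simp [dotProduct, Pi.star_apply, Complex.star_def, Complex.mul_conj,
      Complex.normSq_eq_norm_sq, hη]
  have hSnn : 0 ≤ S := by positivity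
  have hanon : 0 ≤ a := aux_re_nonneg Rs hPSD ξ
  have hbnon : 0 ≤ b := aux_re_nonneg Rs hPSD η
  have hbS : b ≤ N * S := hN η
  clear_value S a b
  -- scaled Cauchy-Schwarz
  have key : ∀ t : ℝ, 0 < t → S ≤ M * (t ^ 2 * a + (1 / t ^ 2) * b) := by
    intro t ht
    have hne : (t : ℂ) ≠ 0 := by exact_mod_cast ht.ne'
    have h1 : Q.mulVec ((t : ℂ) • ξ) ⬝ᵥ star ((((t⁻¹ : ℝ)) : ℂ) • η) = Q.mulVec ξ ⬝ᵥ star η := by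
      rw [Matrix.mulVec_smul, star_smul, smul_dotProduct, dotProduct_smul]
      simp only [smul_eq_mul, Complex.star_def, Complex.conj_ofReal]
      rw [← mul_assoc, ← Complex.ofReal_mul, mul_inv_cancel₀ ht.ne', Complex.ofReal_one, one_mul]
    have h2 := aux_CS Rs Q M hQ ((t : ℂ) • ξ) ((((t⁻¹ : ℝ)) : ℂ) • η)
    rw [h1, hdot] at h2
    rw [← hA, aux_scale A ξ t, aux_scale A η t⁻¹] at h2
    have e1 : (((t ^ 2 : ℝ) : ℂ) * (A.mulVec ξ ⬝ᵥ star ξ)).re = t ^ 2 * a := by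
      rw [Complex.re_ofReal_mul, ← ha]
    have e2 : (((t⁻¹ ^ 2 : ℝ) : ℂ) * (A.mulVec η ⬝ᵥ star η)).re = (1 / t ^ 2) * b := by
      rw [Complex.re_ofReal_mul, ← hb]; ring
    have e3 : ‖(S : ℂ)‖ = S := by
      rw [Complex.norm_real, Real.norm_of_nonneg hSnn]
    rw [e1, e2, e3] at h2
    exact h2
  rcases eq_or_lt_of_le hanon with haz | hapos
  · -- a = 0 : show S ≤ 0 = RHS
    rw [← haz, mul_zero]
    by_contra hc
    push_neg at hc
    have h6 : (0:ℝ) < 2 * M * b + 1 := by positivity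
    set t : ℝ := Real.sqrt ((2 * M * b + 1) / S) with htdef
    have htpos : 0 < t := Real.sqrt_pos.mpr (by positivity)
    have ht2 : t ^ 2 = (2 * M * b + 1) / S := Real.sq_sqrt (by positivity)
    have hk := key t htpos
    rw [← haz, ht2] at hk
    have hx : M * ((2 * M * b + 1) / S * 0 + 1 / ((2 * M * b + 1) / S) * b)
        = M * S * b / (2 * M * b + 1) := by
      field_simp
      ring
    rw [hx, le_div_iff₀ h6] at hk
    nlinarith [mul_nonneg (mul_nonneg hM.le hc.le) hbnon]
  · -- a > 0, hence N > 0
    have hT : 0 ≤ ∑ i, ‖ξ i‖ ^ 2 := by positivity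
    have hNa := hN ξ
    rw [← ha] at hNa
    have hNpos : 0 < N := by nlinarith
    set t : ℝ := Real.sqrt (2 * M * N) with htdef
    have htpos : 0 < t := Real.sqrt_pos.mpr (by positivity)
    have ht2 : t ^ 2 = 2 * M * N := Real.sq_sqrt (by positivity)
    have hk := key t htpos
    rw [ht2] at hk
    have hb2 : 1 / (2 * M * N) * b ≤ 1 / (2 * M * N) * (N * S) := by
      apply mul_le_mul_of_nonneg_left hbS (by positivity)
    have hfin : 1 / (2 * M * N) * (N * S) = S / (2 * M) := by field_simp
    have hM2 : M * (2 * M * N * a + 1 / (2 * M * N) * b) ≤ 2 * M ^ 2 * N * a + S / 2 := by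
      rw [mul_add]
      have : M * (1 / (2 * M * N) * b) ≤ S / 2 := by
        calc M * (1 / (2 * M * N) * b) ≤ M * (S / (2 * M)) := by
              rw [← hfin]; exact mul_le_mul_of_nonneg_left hb2 hM.le
          _ = S / 2 := by field_simp
      nlinarith
    linarith
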